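/- Let d ≥ 4 be an integer and let 𝒜 be a simplicial complex with |𝒜| ≥ 2^d - 2d + 2. Then ∑_{F ∈ 𝒜} 1/(|F|+1) ≥ (2^{d+1}-1)/(d+1) - (2d-2)/3. -/

import Mathlib

open Finset

namespace WeightBound

def pc (n : ℕ) : ℕ := (Nat.digits 2 n).sum

lemma pc_two_mul (n : ℕ) : pc (2 * n) = pc n := by
  rcases Nat.eq_zero_or_pos n with h | h
  · simp [h]
  · unfold pc
    rw [Nat.digits_def' (by norm_num : 1 < 2) (by omega)]
    simp [Nat.mul_div_cancel_left _ (by norm_num : 0 < 2)]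

lemma pc_two_mul_add_one (n : ℕ) : pc (2 * n + 1) = pc n + 1 := by
  unfold pc
  rw [Nat.digits_def' (by norm_num : 1 < 2) (by omega)]
  simp [Nat.mul_add_mod, Nat.mul_add_div (by norm_num : 0 < 2)]
  omega

lemma pc_pos (n : ℕ) (h : 0 < n) : 0 < pc n := by
  induction n using Nat.strong_induction_on with
  | _ n ih =>
    obtain ⟨k, hk | hk⟩ := Nat.even_or_odd' n
    · subst hk
      rw [pc_two_mul]
      exact ih k (by omega) (by omega)
    · subst hk
      rw [pc_two_mul_add_one]
      omega

lemma pc_pow_add (m : ℕ) : ∀ r, r < 2 ^ m → pc (2 ^ m + r) = pc r + 1 := by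
  induction m with
  | zero =>
    intro r hr
    interval_cases r
    show pc (2 * 0 + 1) = pc 0 + 1
    rw [pc_two_mul_add_one]
  | succ m ih =>
    intro r hr
    obtain ⟨s, hs | hs⟩ := Nat.even_or_odd' r
    · have e : 2 ^ (m + 1) + r = 2 * (2 ^ m + s) := by subst hs; ring
      rw [e, pc_two_mul, ih s (by omega), hs, pc_two_mul]
    · have e : 2 ^ (m + 1) + r = 2 * (2 ^ m + s) + 1 := by subst hs; ring
      rw [e, pc_two_mul_add_one, ih s (by omega), hs, pc_two_mul_add_one]

noncomputable def u (j i : ℕ) : ℚ := 1 / ((pc i : ℚ) + j + 1)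

noncomputable def c (j n : ℕ) : ℚ := ∑ i ∈ Finset.range n, u j i

lemma u_nonneg (j i : ℕ) : 0 ≤ u j i := by
  unfold u
  positivity

lemma u_anti (j i : ℕ) : u (j + 1) i ≤ u j i := by
  unfold u
  apply one_div_le_one_div_of_le
  · positivity
  · push_cast; linarith

lemma u_two_mul (j n : ℕ) : u j (2 * n) = u j n := by
  unfold u; rw [pc_two_mul]

lemma u_two_mul_add_one (j n : ℕ) : u j (2 * n + 1) = u (j + 1) n := by
  unfold u; rw [pc_two_mul_add_one]; push_cast; ring_nf

lemma c_two_mul (j n : ℕ) : c j (2 * n) = c j n + c (j + 1) n := by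
  induction n with
  | zero => simp [c]
  | succ n ih =>
    have h : 2 * (n + 1) = (2 * n + 1) + 1 := by ring
    rw [h]
    unfold c at *
    rw [sum_range_succ, sum_range_succ, sum_range_succ (n := n), sum_range_succ (n := n),
      ih, u_two_mul, u_two_mul_add_one]
    ring

lemma c_two_mul_add_one (j n : ℕ) : c j (2 * n + 1) = c j (n + 1) + c (j + 1) n := by
  have h := c_two_mul j n
  unfold c at h ⊢
  rw [sum_range_succ, sum_range_succ (n := n), h, u_two_mul]
  ring

lemma c_succ (j n : ℕ) : c j (n + 1) = c j n + u j n := sum_range_succ _ _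

lemma c_zero (j : ℕ) : c j 0 = 0 := by simp [c]

lemma c_one (j : ℕ) : c j 1 = 1 / ((j : ℚ) + 1) := by
  have : c j 1 = u j 0 := by
    unfold c
    rw [sum_range_succ, sum_range_zero, zero_add]
  rw [this]
  unfold u
  norm_num [pc]

lemma c_mono (j : ℕ) {m n : ℕ} (h : m ≤ n) : c j m ≤ c j n := by
  apply sum_le_sum_of_subset_of_nonneg (range_subset_range.2 h)
  intro i _ _
  exact u_nonneg j i

lemma superadd : ∀ (N j a b : ℕ), a + b ≤ N → b ≤ a → c j (a + b) ≤ c j a + c (j + 1) b := by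
  intro N
  induction N with
  | zero =>
    intro j a b h hba
    have ha : a = 0 := by omega
    have hb : b = 0 := by omega
    simp [ha, hb, c]
  | succ N ih =>
    intro j a b hN hba
    rcases Nat.eq_zero_or_pos b with hb0 | hb
    · subst hb0
      simp [c]
    rcases eq_or_lt_of_le hba with hba' | hlt
    · subst hba'
      rw [show b + b = 2 * b by ring, c_two_mul]
    · obtain ⟨α, hα | hα⟩ := Nat.even_or_odd' a <;> obtain ⟨β, hβ | hβ⟩ := Nat.even_or_odd' b
      · have e : a + b = 2 * (α + β) := by omega
        rw [e, c_two_mul, hα, hβ, c_two_mul, c_two_mul]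
        have h1 := ih j α β (by omega) (by omega)
        have h2 := ih (j + 1) α β (by omega) (by omega)
        linarith
      · have e : a + b = 2 * (α + β) + 1 := by omega
        rw [e, c_two_mul_add_one, hα, hβ, c_two_mul, c_two_mul_add_one]
        have h1 := ih j α (β + 1) (by omega) (by omega)
        rw [← Nat.add_assoc] at h1
        have h2 := ih (j + 1) α β (by omega) (by omega)
        linarith
      · have e : a + b = 2 * (α + β) + 1 := by omega
        rw [e, c_two_mul_add_one, hα, hβ, c_two_mul_add_one, c_two_mul]
        have h1 := ih j (α + 1) β (by omega) (by omega)
        rw [Nat.add_right_comm] at h1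
        have h2 := ih (j + 1) α β (by omega) (by omega)
        linarith
      · have e : a + b = 2 * (α + β + 1) := by omega
        rw [e, c_two_mul, hα, hβ, c_two_mul_add_one, c_two_mul_add_one]
        have h1 := ih j (α + 1) β (by omega) (by omega)
        rw [Nat.add_right_comm] at h1
        have h2 := ih (j + 1) α (β + 1) (by omega) (by omega)
        rw [← Nat.add_assoc] at h2
        have h3 := u_anti (j + 1) β
        have e1 := c_succ (j + 1) β
        have e2 := c_succ (j + 2) β
        have e3 : c (j + 1 + 1) (β + 1) = c (j + 2) (β + 1) := by norm_num
        have e4 : c (j + 1 + 1) β = c (j + 2) β := by norm_num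
        rw [e3] at h2
        rw [e4] at e2 ⊢
        linarith

lemma family_bound : ∀ (n : ℕ) (A : Finset (Finset ℕ)), A.card ≤ n →
    (∀ X ∈ A, ∀ Y ⊆ X, Y ∈ A) →
    ∀ j : ℕ, c j A.card ≤ ∑ F ∈ A, (1 : ℚ) / ((F.card : ℚ) + j + 1) := by
  intro n
  induction n with
  | zero =>
    intro A hA _ j
    have : A = ∅ := card_eq_zero.mp (Nat.le_zero.mp hA)
    simp [this, c_zero]
  | succ n ih =>
    intro A hA hdc j
    by_cases hex : ∃ F ∈ A, F.Nonempty
    · obtain ⟨F₀, hF₀, x, hx⟩ := hex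
      set A0 := A.filter (fun F => x ∉ F) with hA0
      set A1 := (A.filter (fun F => x ∈ F)).image (fun F => F.erase x) with hA1
      have hinj : Set.InjOn (fun F : Finset ℕ => F.erase x)
          (A.filter (fun F => x ∈ F) : Finset (Finset ℕ)) := by
        intro F hF G hG h
        simp only [coe_filter, Set.mem_setOf_eq] at hF hG
        have h2 := congrArg (insert x) h
        simpa [insert_erase hF.2, insert_erase hG.2] using h2
      have hcard1 : A1.card = (A.filter (fun F => x ∈ F)).card :=
        card_image_of_injOn hinj
      have hcards : A0.card + A1.card = A.card := by
        rw [hcard1, hA0, add_comm]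
        exact card_filter_add_card_filter_not (p := fun F => x ∈ F)
      have hsub : A1 ⊆ A0 := by
        intro G hG
        simp only [hA1, mem_image, mem_filter] at hG
        obtain ⟨F, ⟨hFA, hxF⟩, rfl⟩ := hG
        simp only [hA0, mem_filter]
        exact ⟨hdc F hFA _ (erase_subset x F), notMem_erase x F⟩
      have hA0lt : A0.card < A.card := by
        apply card_lt_card
        rw [ssubset_iff_of_subset (filter_subset _ _)]
        exact ⟨F₀, hF₀, by simp [hA0, hx]⟩
      have hdc0 : ∀ X ∈ A0, ∀ Y ⊆ X, Y ∈ A0 := by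
        intro X hX Y hY
        rw [hA0, mem_filter] at hX ⊢
        exact ⟨hdc X hX.1 Y hY, fun hxY => hX.2 (hY hxY)⟩
      have hdc1 : ∀ X ∈ A1, ∀ Y ⊆ X, Y ∈ A1 := by
        intro X hX Y hY
        simp only [hA1, mem_image, mem_filter] at hX ⊢
        obtain ⟨F, ⟨hFA, hxF⟩, rfl⟩ := hX
        have hxY : x ∉ Y := fun h => notMem_erase x F (hY h)
        refine ⟨insert x Y, ⟨hdc F hFA _ ?_, mem_insert_self x Y⟩, by rw [erase_insert hxY]⟩
        exact insert_subset hxF (hY.trans (erase_subset x F))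
      have hle := card_le_card hsub
      have h0 := ih A0 (by omega) hdc0 j
      have h1 := ih A1 (by omega) hdc1 (j + 1)
      simp only [Nat.cast_add, Nat.cast_one] at h1
      have hsum : ∑ F ∈ A, (1 : ℚ) / ((F.card : ℚ) + j + 1)
          = (∑ F ∈ A0, (1 : ℚ) / ((F.card : ℚ) + j + 1))
            + ∑ G ∈ A1, (1 : ℚ) / ((G.card : ℚ) + (j + 1) + 1) := by
        rw [hA1, sum_image hinj, hA0]
        rw [← sum_filter_add_sum_filter_not A (fun F => x ∈ F), add_comm]
        congr 1
        apply sum_congr rfl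
        intro F hF
        rw [mem_filter] at hF
        have hc : (F.erase x).card + 1 = F.card := by
          rw [card_erase_of_mem hF.2]
          have : 1 ≤ F.card := card_pos.mpr ⟨x, hF.2⟩
          omega
        have hcq : ((F.erase x).card : ℚ) + 1 = (F.card : ℚ) := by
          exact_mod_cast congrArg (Nat.cast : ℕ → ℚ) hc
        rw [← hcq]
        push_cast
        ring_nf
      rw [hsum, ← hcards]
      calc c j (A0.card + A1.card) ≤ c j A0.card + c (j + 1) A1.card :=
            superadd (A0.card + A1.card) j _ _ le_rfl (card_le_card hsub)
        _ ≤ _ := add_le_add h0 h1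
    · push_neg at hex
      have hsub : A ⊆ {∅} := by
        intro F hF
        rw [mem_singleton]
        exact hex F hF
      rcases subset_singleton_iff.mp hsub with rfl | rfl
      · simp [c_zero]
      · simp only [card_singleton, sum_singleton, card_empty]
        rw [c_one]
        push_cast
        norm_num

lemma c_pow (m : ℕ) : ∀ j : ℕ, c j (2 ^ m)
    = ∑ k ∈ range (m + 1), (m.choose k : ℚ) / ((k : ℚ) + j + 1) := by
  induction m with
  | zero =>
    intro j
    rw [pow_zero, c_one]
    simp
  | succ m ih =>
    intro j
    rw [show (2 : ℕ) ^ (m + 1) = 2 * 2 ^ m by ring, c_two_mul, ih j, ih (j + 1)]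
    rw [sum_range_succ' (fun k => ((m + 1).choose k : ℚ) / ((k : ℚ) + j + 1)) (m + 1)]
    have hsplit : ∀ k ∈ range (m + 1),
        (((m + 1).choose (k + 1) : ℚ)) / (((k + 1 : ℕ) : ℚ) + j + 1)
        = ((m.choose k : ℚ)) / ((k : ℚ) + (j + 1) + 1)
          + ((m.choose (k + 1) : ℚ)) / (((k + 1 : ℕ) : ℚ) + j + 1) := by
      intro k _
      rw [Nat.choose_succ_succ]
      push_cast
      ring
    rw [sum_congr rfl hsplit, sum_add_distrib]
    have h2 : ∑ k ∈ range (m + 1), ((m.choose (k + 1) : ℚ)) / (((k + 1 : ℕ) : ℚ) + j + 1)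
        = ∑ k ∈ range (m + 1), (m.choose k : ℚ) / ((k : ℚ) + j + 1)
          - (m.choose 0 : ℚ) / ((0 : ℚ) + j + 1) := by
      rw [sum_range_succ' (fun k => ((m.choose k : ℚ)) / ((k : ℚ) + j + 1)) m]
      rw [sum_range_succ]
      simp [Nat.choose_succ_self]
    rw [h2]
    simp only [Nat.choose_zero_right, Nat.cast_one, Nat.cast_zero]
    push_cast
    ring

lemma c_pow_zero (d : ℕ) : c 0 (2 ^ d) = ((2 : ℚ) ^ (d + 1) - 1) / ((d : ℚ) + 1) := by
  rw [c_pow d 0]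
  simp only [Nat.cast_zero]
  have key : ∀ k, ((d.choose k : ℚ)) / ((k : ℚ) + 0 + 1)
      = ((d + 1).choose (k + 1) : ℚ) / ((d : ℚ) + 1) := by
    intro k
    have h := Nat.add_one_mul_choose_eq d k
    have hq : ((d : ℚ) + 1) * (d.choose k : ℚ)
        = ((d + 1).choose (k + 1) : ℚ) * ((k : ℚ) + 1) := by
      exact_mod_cast congrArg (Nat.cast : ℕ → ℚ) h
    have hk : ((k : ℚ) + 0 + 1) ≠ 0 := by positivity
    have hd : ((d : ℚ) + 1) ≠ 0 := by positivity
    field_simp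
    linarith [hq]
  rw [sum_congr rfl (fun k _ => key k), ← sum_div]
  congr 1
  have h := Nat.sum_range_choose (d + 1)
  have h2 : ∑ k ∈ range (d + 2), ((d + 1).choose k : ℚ) = 2 ^ (d + 1) := by
    exact_mod_cast congrArg (Nat.cast : ℕ → ℚ) h
  rw [sum_range_succ' (fun k => (((d + 1).choose k : ℚ))) (d + 1)] at h2
  simp only [Nat.choose_zero_right, Nat.cast_one] at h2
  linarith

lemma pow_ge (d : ℕ) (hd : 3 ≤ d) : 2 * d + 2 ≤ 2 ^ d := by
  induction d with
  | zero => omega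
  | succ d ih =>
    rcases Nat.lt_or_ge d 3 with h | h
    · interval_cases d <;> first | omega | norm_num
    · have := ih h
      have h2 : 2 ≤ 2 ^ d := Nat.one_lt_two_pow (by omega)
      rw [pow_succ]
      omega

end WeightBound

theorem weight_bound_simple (d : ℕ) (hd : 4 ≤ d) (A : Finset (Finset ℕ))
    (hne : A.Nonempty) (hdc : ∀ X ∈ A, ∀ Y ⊆ X, Y ∈ A)
    (hAcard : 2 ^ d - 2 * d + 2 ≤ A.card) :
    ((2 : ℚ) ^ (d + 1) - 1) / ((d : ℚ) + 1) - (2 * (d : ℚ) - 2) / 3 ≤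
      ∑ F ∈ A, (1 : ℚ) / ((F.card : ℚ) + 1) := by
  classical
  open WeightBound in
  have hpow : 2 * d + 2 ≤ 2 ^ d := pow_ge d (by omega)
  have hpow' : 2 * (d - 1) + 2 ≤ 2 ^ (d - 1) := pow_ge (d - 1) (by omega)
  have hdd : d - 1 + 1 = d := by omega
  have hpow2 : 2 ^ (d - 1) + 2 ^ (d - 1) = 2 ^ d := by
    have h := pow_succ 2 (d - 1)
    rw [hdd] at h
    omega
  set N : ℕ := 2 ^ d - 2 * d + 2 with hN
  -- step 1: the family bound
  have h1 : c 0 A.card ≤ ∑ F ∈ A, (1 : ℚ) / ((F.card : ℚ) + 1) := by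
    have := family_bound A.card A le_rfl hdc 0
    simpa using this
  -- step 2: monotonicity
  have h2 : c 0 N ≤ c 0 A.card := c_mono 0 hAcard
  -- step 3: split c 0 (2^d)
  have hNle : N ≤ 2 ^ d := by omega
  have h3 : c 0 (2 ^ d) = c 0 N + ∑ i ∈ Finset.Ico N (2 ^ d), u 0 i := by
    unfold c
    simp only [range_eq_Ico]
    rw [Finset.sum_Ico_consecutive _ (Nat.zero_le N) hNle]
  -- step 4: each term in the tail is at most 1/3
  have h4 : ∀ i ∈ Finset.Ico N (2 ^ d), u 0 i ≤ 1 / 3 := by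
    intro i hi
    rw [Finset.mem_Ico] at hi
    have hgt : 2 ^ (d - 1) < i := by omega
    have hlt : i < 2 ^ d := hi.2
    have hr : i = 2 ^ (d - 1) + (i - 2 ^ (d - 1)) := by omega
    have hpc : 2 ≤ pc i := by
      rw [hr, pc_pow_add (d - 1) _ (by omega)]
      have := pc_pos (i - 2 ^ (d - 1)) (by omega)
      omega
    unfold u
    rw [div_le_div_iff₀ (by positivity) (by norm_num)]
    have : (2 : ℚ) ≤ (pc i : ℚ) := by exact_mod_cast hpc
    push_cast
    linarith
  -- step 5: bound the tail sum
  have hcard : (Finset.Ico N (2 ^ d)).card = 2 * d - 2 := by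
    rw [Nat.card_Ico]
    omega
  have h5 : ∑ i ∈ Finset.Ico N (2 ^ d), u 0 i ≤ (2 * (d : ℚ) - 2) / 3 := by
    calc ∑ i ∈ Finset.Ico N (2 ^ d), u 0 i
        ≤ (Finset.Ico N (2 ^ d)).card • ((1 : ℚ) / 3) := Finset.sum_le_card_nsmul _ _ _ h4
      _ = ((2 * d - 2 : ℕ) : ℚ) / 3 := by
          rw [hcard, nsmul_eq_mul]
          ring
      _ = (2 * (d : ℚ) - 2) / 3 := by
          congr 1
          push_cast [Nat.cast_sub (by omega : 2 ≤ 2 * d)]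
          ring
  have h6 := c_pow_zero d
  linarith
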